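/- For all positive integers n, the sum of Φ(d) over all positive divisors d of n equals 2^n − 1. -/
import Mathlib


/-- `Phi n` is the number of nonempty subsets `A` of `{1,2,...,n}` such that
`gcd(A)` is relatively prime to `n`. -/
def Phi (n : ℕ) : ℕ :=
  ((Finset.Icc 1 n).powerset.filter
    (fun A => A.Nonempty ∧ Nat.gcd (A.gcd id) n = 1)).card

open Finset

lemma fiber_card (n g : ℕ) (hg : g ∣ n) (hn : 0 < n) :
    (((Finset.Icc 1 n).powerset.filter
      (fun A => A.Nonempty ∧ Nat.gcd (A.gcd id) n = g)).card) = Phi (n / g) := by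
  have hg0 : 0 < g := Nat.pos_of_dvd_of_pos hg hn
  unfold Phi
  symm
  refine Finset.card_bij' (fun B _ => B.image (fun b => g * b))
    (fun A _ => A.image (fun a => a / g)) ?hi ?hj ?left ?right
  case hi =>
    intro B hB
    simp only [mem_filter, mem_powerset] at hB ⊢
    obtain ⟨hsub, hne, hgcd⟩ := hB
    refine ⟨?_, hne.image _, ?_⟩
    · intro x hx
      simp only [mem_image] at hx
      obtain ⟨b, hb, rfl⟩ := hx
      have hb' := hsub hb
      simp only [mem_Icc] at hb' ⊢
      constructor
      · exact Nat.mul_pos hg0 hb'.1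
      · calc g * b ≤ g * (n / g) := Nat.mul_le_mul_left g hb'.2
          _ = n := Nat.mul_div_cancel' hg
    · have : (B.image (fun b => g * b)).gcd id = g * B.gcd id := by
        rw [Finset.gcd_image]
        simpa using (Finset.gcd_mul_left (s := B) (f := id) (a := g))
      rw [this]
      conv_lhs => rw [show n = g * (n / g) from (Nat.mul_div_cancel' hg).symm]
      rw [Nat.gcd_mul_left, hgcd, mul_one]
  case hj =>
    intro A hA
    simp only [mem_filter, mem_powerset] at hA ⊢
    obtain ⟨hsub, hne, hgcd⟩ := hA
    have hdvd : ∀ a ∈ A, g ∣ a := by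
      intro a ha
      exact dvd_trans (hgcd ▸ Nat.gcd_dvd_left _ _) (Finset.gcd_dvd (f := id) ha)
    refine ⟨?_, hne.image _, ?_⟩
    · intro x hx
      simp only [mem_image] at hx
      obtain ⟨a, ha, rfl⟩ := hx
      have ha' := hsub ha
      simp only [mem_Icc] at ha' ⊢
      constructor
      · exact Nat.one_le_div_iff hg0 |>.mpr (Nat.le_of_dvd ha'.1 (hdvd a ha))
      · exact Nat.div_le_div_right ha'.2
    · have key : g * (A.image (fun a => a / g)).gcd id = A.gcd id := by
        rw [Finset.gcd_image]
        have : A.gcd (fun a => g * (a / g)) = A.gcd id := by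
          apply Finset.gcd_congr rfl
          intro a ha
          exact Nat.mul_div_cancel' (hdvd a ha)
        rw [← this]
        simpa using (Finset.gcd_mul_left (s := A) (f := fun a => a / g) (a := g)).symm
      have := hgcd
      conv at this => rw [← key, show n = g * (n / g) from (Nat.mul_div_cancel' hg).symm,
        Nat.gcd_mul_left]
      exact Nat.eq_of_mul_eq_mul_left hg0 (by rw [this, mul_one])
  case left =>
    intro B hB
    ext b
    simp only [mem_image]
    constructor
    · rintro ⟨x, ⟨c, hc, rfl⟩, rfl⟩
      simpa [Nat.mul_div_cancel_left _ hg0] using hc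
    · intro hb
      exact ⟨g * b, ⟨b, hb, rfl⟩, by simp [Nat.mul_div_cancel_left _ hg0]⟩
  case right =>
    intro A hA
    simp only [mem_filter, mem_powerset] at hA
    obtain ⟨hsub, hne, hgcd⟩ := hA
    have hdvd : ∀ a ∈ A, g ∣ a := by
      intro a ha
      exact dvd_trans (hgcd ▸ Nat.gcd_dvd_left _ _) (Finset.gcd_dvd (f := id) ha)
    ext a
    simp only [mem_image]
    constructor
    · rintro ⟨x, ⟨c, hc, rfl⟩, rfl⟩
      rwa [Nat.mul_div_cancel' (hdvd c hc)]
    · intro ha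
      exact ⟨a / g, ⟨a, ha, rfl⟩, Nat.mul_div_cancel' (hdvd a ha)⟩

theorem sum_Phi_divisors (n : ℕ) (hn : 0 < n) :
    ∑ d ∈ n.divisors, Phi d = 2 ^ n - 1 := by
  have h1 : ∑ d ∈ n.divisors, Phi d = ∑ g ∈ n.divisors, Phi (n / g) :=
    (Nat.sum_div_divisors n Phi).symm
  rw [h1]
  have h2 : ∀ g ∈ n.divisors, Phi (n / g) =
      (((Finset.Icc 1 n).powerset.filter
        (fun A => A.Nonempty ∧ Nat.gcd (A.gcd id) n = g)).card) := by
    intro g hg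
    exact (fiber_card n g (Nat.mem_divisors.mp hg).1 hn).symm
  rw [Finset.sum_congr rfl h2]
  have h3 : ∑ g ∈ n.divisors,
      (((Finset.Icc 1 n).powerset.filter
        (fun A => A.Nonempty ∧ Nat.gcd (A.gcd id) n = g)).card)
      = ((Finset.Icc 1 n).powerset.filter (fun A => A.Nonempty)).card := by
    have H : ∀ A ∈ (Finset.Icc 1 n).powerset.filter (fun A => A.Nonempty),
        Nat.gcd (A.gcd id) n ∈ n.divisors := fun A _ =>
      Nat.mem_divisors.mpr ⟨Nat.gcd_dvd_right _ _, hn.ne'⟩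
    rw [Finset.card_eq_sum_card_fiberwise H]
    refine Finset.sum_congr rfl fun g hg => ?_
    rw [Finset.filter_filter]
  rw [h3]
  have h4 : (Finset.Icc 1 n).powerset.filter (fun A => A.Nonempty)
      = (Finset.Icc 1 n).powerset.erase ∅ := by
    ext A
    simp [Finset.nonempty_iff_ne_empty, and_comm]
  rw [h4, Finset.card_erase_of_mem (Finset.empty_mem_powerset _),
    Finset.card_powerset, Nat.card_Icc]
  simp
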